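/- arXiv:2509.19279 — 2 statements merged into one kernel-verified Lean document; each statement's English description precedes it below -/
import Mathlib

section
/- In the Minimum-k-Union-to-plurality-CCDC construction, if S' ⊆ S is any family of exactly k sets and D' = ⋃_{S ∈ S'} S, then p is the unique plurality winner of the election (C \ D', V): p's plurality score is at least k + N, b_1's score is k − 1 + N, each u ∈ U \ D' has score at most N, and each b_j with j ≥ 2 has score 0. -/
/-- Candidates for the MkU construction: `U = Fin n`, buffers `B = Fin (n+1)`,
and the distinguished candidate `p`. -/
abbrev MCand (n : ℕ) := Fin n ⊕ (Fin (n + 1) ⊕ Unit)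

/-- The distinguished candidate `p`. -/
def mp {n : ℕ} : MCand n := Sum.inr (Sum.inr ())

/-- Buffer candidate `b_j`. -/
def mb {n : ℕ} (j : Fin (n + 1)) : MCand n := Sum.inr (Sum.inl j)

/-- Element candidate `u`. -/
def mu {n : ℕ} (u : Fin n) : MCand n := Sum.inl u

/-- `N` = the maximum over `u ∈ U` of the number of sets containing `u`. -/
def NVal {n m : ℕ} (S : Fin m → Finset (Fin n)) : ℕ :=
  Finset.univ.sup (fun u : Fin n => (Finset.univ.filter (fun i => u ∈ S i)).card)

/-- A vote is a preference list (most preferred first); its top choice after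
deleting the candidates in `D` is the first surviving entry. -/
def topAfter {C : Type*} [DecidableEq C] (D : Finset C) (l : List C) : Option C :=
  (l.filter (fun c => decide (c ∉ D))).head?

/-- Plurality score of candidate `c` after deleting `D`: the number of votes
whose top surviving candidate is `c`. -/
def plScore {C : Type*} [DecidableEq C] (votes : List (List C)) (D : Finset C)
    (c : C) : ℕ :=
  votes.countP (fun l => decide (topAfter D l = some c))

/-- Type-1 vote for set `S_i`: members of `S_i`, then `p`, then the rest. -/
noncomputable def type1 {n m : ℕ} (S : Fin m → Finset (Fin n)) (i : Fin m) : List (MCand n) :=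
  ((S i).toList.map mu) ++ [mp] ++
    (Finset.univ.toList.filter
      (fun c : MCand n => decide (c ∉ ((S i).image mu ∪ {mp}))))

/-- Type-2 vote: `b_1 > ⋯ > b_{n+1} > (members of U) > p`. -/
def type2 (n : ℕ) : List (MCand n) :=
  ((List.finRange (n + 1)).map mb) ++ ((List.finRange n).map mu) ++ [mp]

/-- Type-3 vote: `p` first, then the rest. -/
noncomputable def type3 (n : ℕ) : List (MCand n) :=
  mp :: (Finset.univ.toList.filter (fun c : MCand n => decide (c ≠ mp)))

/-- The election's votes: one Type-1 vote per set, `k - 1 + N` Type-2 votes and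
`N` Type-3 votes. -/
noncomputable def mkuVotes {n m : ℕ} (S : Fin m → Finset (Fin n)) (k : ℕ) :
    List (List (MCand n)) :=
  ((List.finRange m).map (type1 S)) ++
    List.replicate (k - 1 + NVal S) (type2 n) ++
    List.replicate (NVal S) (type3 n)

-- aux lemmas
lemma countP_finRange (m : ℕ) (p : Fin m → Prop) [DecidablePred p] :
    (List.finRange m).countP (fun i => decide (p i)) = (Finset.univ.filter p).card := by
  rw [List.countP_eq_length_filter]
  have : (Finset.univ : Finset (Fin m)).val = ↑(List.finRange m) := by rw [Fin.univ_def]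
  rw [Finset.card, Finset.filter_val, this]
  simp [Multiset.filter_coe]

lemma countP_replicate {α : Type*} (p : α → Bool) (a : α) (N : ℕ) :
    (List.replicate N a).countP p = if p a then N else 0 := by
  induction N with
  | zero => simp
  | succ N ih => simp [List.replicate_succ, List.countP_cons, ih]; split <;> simp

lemma topAfter_cons_not_mem {C : Type*} [DecidableEq C] (D : Finset C) (a : C) (l : List C)
    (h : a ∉ D) : topAfter D (a :: l) = some a := by
  simp [topAfter, List.filter_cons, h]

lemma topAfter_type1 {n m : ℕ} (S : Fin m → Finset (Fin n)) (i : Fin m) (D : Finset (MCand n))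
    (hp : (mp : MCand n) ∉ D) (c : MCand n) (h : topAfter D (type1 S i) = some c) :
    c = mp ∨ ∃ u ∈ S i, c = mu u := by
  unfold type1 topAfter at h
  rw [List.filter_append, List.filter_append] at h
  have hmp : (List.filter (fun c => decide (c ∉ D)) [mp]) = [mp] := by simp [hp]
  rw [hmp] at h
  rcases hl : List.filter (fun c => decide (c ∉ D)) ((S i).toList.map mu) with _ | ⟨a, t⟩
  · rw [hl] at h; simp at h; left; exact h.symm
  · rw [hl] at h; simp at h
    right
    have ha : a ∈ (S i).toList.map mu := List.mem_of_mem_filter (hl ▸ (List.mem_cons_self : a ∈ a :: t))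
    obtain ⟨u, hu, rfl⟩ := List.mem_map.mp ha
    exact ⟨u, by simpa using hu, h.symm⟩

lemma topAfter_type1_mp {n m : ℕ} (S : Fin m → Finset (Fin n)) (i : Fin m) (D : Finset (MCand n))
    (hp : (mp : MCand n) ∉ D) (hall : ∀ u ∈ S i, mu u ∈ D) :
    topAfter D (type1 S i) = some mp := by
  unfold type1 topAfter
  rw [List.filter_append, List.filter_append]
  have h1 : List.filter (fun c => decide (c ∉ D)) ((S i).toList.map mu) = [] := by
    rw [List.filter_eq_nil_iff]
    intro a ha
    obtain ⟨u, hu, rfl⟩ := List.mem_map.mp ha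
    simp [hall u (by simpa using hu)]
  rw [h1]
  simp [hp]

lemma topAfter_type2 {n : ℕ} (D : Finset (MCand n)) (hb : (mb 0 : MCand n) ∉ D) :
    topAfter D (type2 n) = some (mb 0) := by
  have h : type2 n = mb 0 :: (((List.finRange n).map Fin.succ).map mb ++ ((List.finRange n).map mu) ++ [mp]) := by
    simp [type2, List.finRange_succ]
  rw [h, topAfter_cons_not_mem _ _ _ hb]


/-- In the MkU-to-plurality-CCDC construction, if `S'` is any family of exactly
`k` sets and `D' = ⋃_{S ∈ S'} S`, then: `p`'s plurality score is at least
`k + N`, `b_1`'s score is `k - 1 + N`, each surviving `u ∈ U` has score at most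
`N`, each buffer `b_j` with `j ≥ 2` has score `0`, and `p` is the unique
plurality winner of `(C \ D', V)`. -/
theorem stmt10 {n m : ℕ} (hn : 0 < n)
    (S : Fin m → Finset (Fin n)) (hSne : ∀ i, (S i).Nonempty)
    (k : ℕ) (hk : 1 < k) (hkm : k ≤ m)
    (T : Finset (Fin m)) (hT : T.card = k)
    (D' : Finset (MCand n)) (hD' : D' = (T.biUnion S).image mu) :
    k + NVal S ≤ plScore (mkuVotes S k) D' mp ∧
    plScore (mkuVotes S k) D' (mb 0) = k - 1 + NVal S ∧
    (∀ u : Fin n, mu u ∉ D' → plScore (mkuVotes S k) D' (mu u) ≤ NVal S) ∧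
    (∀ j : Fin (n + 1), j ≠ 0 → plScore (mkuVotes S k) D' (mb j) = 0) ∧
    (∀ c : MCand n, c ∉ D' → c ≠ mp →
      plScore (mkuVotes S k) D' c < plScore (mkuVotes S k) D' mp) := by
  have hpD : (mp : MCand n) ∉ D' := by subst hD'; simp [mp, mu]
  have hbD : ∀ j : Fin (n+1), (mb j : MCand n) ∉ D' := by subst hD'; simp [mb, mu]
  have hmuD : ∀ u : Fin n, mu u ∈ D' ↔ ∃ i ∈ T, u ∈ S i := by
    subst hD'; intro u
    simp [mu, Finset.mem_image, Finset.mem_biUnion]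
  have ht3 : topAfter D' (type3 n) = some mp := topAfter_cons_not_mem _ _ _ hpD
  have ht2 : topAfter D' (type2 n) = some (mb 0) := topAfter_type2 _ (hbD 0)
  have hb0mp : (mb 0 : MCand n) ≠ mp := by simp [mb, mp]
  have hsc : ∀ c : MCand n, plScore (mkuVotes S k) D' c =
      (List.finRange m).countP (fun i => decide (topAfter D' (type1 S i) = some c)) +
      ((if topAfter D' (type2 n) = some c then k - 1 + NVal S else 0) +
       (if topAfter D' (type3 n) = some c then NVal S else 0)) := by
    intro c
    simp only [plScore, mkuVotes, List.countP_append, List.countP_map, countP_replicate,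
      Function.comp_def, decide_eq_true_eq]
    rw [Nat.add_assoc]
  -- p score
  have hTk : (List.finRange m).countP (fun i => decide (i ∈ T)) = k := by
    rw [countP_finRange]; simpa using hT
  have hpge : k + NVal S ≤ plScore (mkuVotes S k) D' mp := by
    rw [hsc, ht2, ht3, if_neg (by simpa using hb0mp), if_pos rfl]
    have h1 : k ≤ (List.finRange m).countP
        (fun i => decide (topAfter D' (type1 S i) = some mp)) := by
      rw [← hTk]
      apply List.countP_mono_left
      intro i _ hi
      simp only [decide_eq_true_eq] at hi ⊢
      exact topAfter_type1_mp S i D' hpD (fun u hu => (hmuD u).mpr ⟨i, hi, hu⟩)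
    omega
  have hb1 : plScore (mkuVotes S k) D' (mb 0) = k - 1 + NVal S := by
    rw [hsc, ht2, ht3, if_pos rfl, if_neg (by simpa using hb0mp.symm)]
    have h0 : (List.finRange m).countP
        (fun i => decide (topAfter D' (type1 S i) = some (mb 0))) = 0 := by
      rw [List.countP_eq_zero]
      intro i _
      simp only [decide_eq_true_eq]
      intro h
      rcases topAfter_type1 S i D' hpD _ h with h' | ⟨u, _, h'⟩
      · exact hb0mp h'
      · simp [mb, mu] at h'
    omega
  have hus : ∀ u : Fin n, plScore (mkuVotes S k) D' (mu u) ≤ NVal S := by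
    intro u
    rw [hsc, ht2, ht3, if_neg (by simp [mb, mu]), if_neg (by simp [mp, mu])]
    have h1 : (List.finRange m).countP
        (fun i => decide (topAfter D' (type1 S i) = some (mu u))) ≤
        (List.finRange m).countP (fun i => decide (u ∈ S i)) := by
      apply List.countP_mono_left
      intro i _ hi
      simp only [decide_eq_true_eq] at hi ⊢
      rcases topAfter_type1 S i D' hpD _ hi with h' | ⟨v, hv, h'⟩
      · exact absurd h'.symm (by simp [mp, mu])
      · obtain rfl : v = u := by simpa [mu] using h'.symm
        exact hv
    have h2 : (List.finRange m).countP (fun i => decide (u ∈ S i)) ≤ NVal S := by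
      rw [countP_finRange]
      exact Finset.le_sup (f := fun v : Fin n => (Finset.univ.filter (fun i => v ∈ S i)).card)
        (Finset.mem_univ u)
    omega
  have hbj : ∀ j : Fin (n + 1), j ≠ 0 → plScore (mkuVotes S k) D' (mb j) = 0 := by
    intro j hj
    rw [hsc, ht2, ht3, if_neg (by simp [mb]; exact fun h => hj h.symm),
      if_neg (by simp [mp, mb])]
    have h0 : (List.finRange m).countP
        (fun i => decide (topAfter D' (type1 S i) = some (mb j))) = 0 := by
      rw [List.countP_eq_zero]
      intro i _
      simp only [decide_eq_true_eq]
      intro h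
      rcases topAfter_type1 S i D' hpD _ h with h' | ⟨v, _, h'⟩
      · exact absurd h' (by simp [mb, mp])
      · simp [mb, mu] at h'
    omega
  refine ⟨hpge, hb1, fun u _ => hus u, hbj, ?_⟩
  intro c hc hcp
  rcases c with u | (j | ⟨⟩)
  · have h := hus u
    simp only [mu] at h
    omega
  · by_cases h0 : j = 0
    · subst h0
      have h := hb1
      simp only [mb] at h
      omega
    · have := hbj j h0
      simp only [mb] at this
      omega
  · exact absurd rfl hcp
end

section
/- In the Hitting-Set-to-plurality-DCUDC construction, if there exists a deletion set D ⊆ C \ {c} such that c is not a unique plurality winner of (C \ D, V), then B' = B \ D is a hitting set of S with |B'| ≤ k. -/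
/-- Candidates for the Hitting-Set construction: `B = Fin m` together with the
two special candidates `c` and `w`. -/
abbrev HCand (m : ℕ) := Fin m ⊕ Bool

/-- The distinguished candidate `c`. -/
def hcand {m : ℕ} : HCand m := Sum.inr true

/-- The candidate `w`. -/
def hwand {m : ℕ} : HCand m := Sum.inr false

/-- The candidate `b_j`. -/
def hb {m : ℕ} (j : Fin m) : HCand m := Sum.inl j

/-- Vote `c > w > ⋯`. -/
def hv1 (m : ℕ) : List (HCand m) := [hcand, hwand] ++ (List.finRange m).map hb

/-- Vote `w > c > ⋯`. -/
def hv2 (m : ℕ) : List (HCand m) := [hwand, hcand] ++ (List.finRange m).map hb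

/-- Vote `S_i > c > ⋯` (members of `S_i`, then `c`, then the rest). -/
noncomputable def hv3 {m n : ℕ} (S : Fin n → Finset (Fin m)) (i : Fin n) :
    List (HCand m) :=
  ((S i).toList.map hb) ++ [hcand] ++
    (Finset.univ.toList.filter
      (fun x : HCand m => decide (x ∉ ((S i).image hb ∪ {hcand}))))

/-- Vote `b_j > w > ⋯`. -/
noncomputable def hv4 {m : ℕ} (j : Fin m) : List (HCand m) :=
  [hb j, hwand] ++
    (Finset.univ.toList.filter
      (fun x : HCand m => decide (x ∉ ({hb j, hwand} : Finset (HCand m)))))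

/-- The votes of the constructed election: `2(m-k)+2n(k+1)+4` votes `c > w > ⋯`,
`2n(k+1)+5` votes `w > c > ⋯`, for each `i` `2(k+1)` votes `S_i > c > ⋯`, and
for each `j` two votes `b_j > w > ⋯`. -/
noncomputable def hsVotes {m n : ℕ} (S : Fin n → Finset (Fin m)) (k : ℕ) :
    List (List (HCand m)) :=
  List.replicate (2 * (m - k) + 2 * n * (k + 1) + 4) (hv1 m) ++
    List.replicate (2 * n * (k + 1) + 5) (hv2 m) ++
    (((List.finRange n).map (fun i => List.replicate (2 * (k + 1)) (hv3 S i))).flatten) ++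
    (((List.finRange m).map (fun j => List.replicate 2 (hv4 j))).flatten)

section Helpers

variable {C : Type*} [DecidableEq C]

lemma topAfter_append (D : Finset C) (l₁ l₂ : List C) :
    topAfter D (l₁ ++ l₂) = (topAfter D l₁).or (topAfter D l₂) := by
  simp [topAfter, List.filter_append, List.head?_append]

lemma topAfter_cons (D : Finset C) (a : C) (l : List C) :
    topAfter D (a :: l) = if a ∈ D then topAfter D l else some a := by
  simp only [topAfter, List.filter_cons]
  by_cases h : a ∈ D <;> simp [h]

lemma topAfter_mem {D : Finset C} {l : List C} {x : C} (h : topAfter D l = some x) :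
    x ∈ l ∧ x ∉ D := by
  have h' : (l.filter (fun c => decide (c ∉ D))).head? = some x := h
  have hx : x ∈ l.filter (fun c => decide (c ∉ D)) :=
    List.mem_of_mem_head? (Option.mem_def.mpr h')
  simpa using List.mem_filter.mp hx

lemma topAfter_ne_none {D : Finset C} {l : List C} {x : C} (hx : x ∈ l) (hxD : x ∉ D) :
    topAfter D l ≠ none := by
  intro h
  rw [topAfter, List.head?_eq_none_iff, List.filter_eq_nil_iff] at h
  exact h x hx (by simpa using hxD)

lemma topAfter_eq_none {D : Finset C} {l : List C} (h : ∀ x ∈ l, x ∈ D) :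
    topAfter D l = none := by
  rw [topAfter, List.head?_eq_none_iff, List.filter_eq_nil_iff]
  intro a ha
  simpa using h a ha

end Helpers

section HFacts

variable {m n : ℕ} {D : Finset (HCand m)} (hcD : hcand ∉ D)

lemma hb_ne_hcand (j : Fin m) : (hb j : HCand m) ≠ hcand := by simp [hb, hcand]
lemma hb_ne_hwand (j : Fin m) : (hb j : HCand m) ≠ hwand := by simp [hb, hwand]
lemma hwand_ne_hcand : (hwand : HCand m) ≠ hcand := by simp [hwand, hcand]

include hcD

lemma top_hv1 : topAfter D (hv1 m) = some hcand := by
  rw [hv1, List.cons_append, topAfter_cons, if_neg hcD]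

lemma top_hv2 : topAfter D (hv2 m) = if hwand ∈ D then some hcand else some hwand := by
  rw [hv2, List.cons_append, List.cons_append, topAfter_cons, topAfter_cons, if_neg hcD]

lemma top_hv3_cases (S : Fin n → Finset (Fin m)) (i : Fin n) :
    ((∀ j ∈ S i, hb j ∈ D) ∧ topAfter D (hv3 S i) = some hcand) ∨
    ((¬ ∀ j ∈ S i, hb j ∈ D) ∧ ∃ j ∈ S i, hb j ∉ D ∧
      topAfter D (hv3 S i) = some (hb j)) := by
  rw [hv3, topAfter_append, topAfter_append]
  by_cases h : ∀ j ∈ S i, hb j ∈ D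
  · left
    refine ⟨h, ?_⟩
    have h1 : topAfter D ((S i).toList.map hb) = none := by
      refine topAfter_eq_none ?_
      intro x hx
      obtain ⟨j, hj, rfl⟩ := List.mem_map.mp hx
      exact h j (by simpa using hj)
    rw [h1]
    have h2 : topAfter D [hcand] = some hcand := by
      rw [topAfter_cons, if_neg hcD]
    rw [h2]
    rfl
  · right
    refine ⟨h, ?_⟩
    push_neg at h
    obtain ⟨j, hj, hjD⟩ := h
    have h1 : topAfter D ((S i).toList.map hb) ≠ none :=
      topAfter_ne_none (List.mem_map.mpr ⟨j, by simpa using hj, rfl⟩) hjD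
    obtain ⟨x, hx⟩ := Option.ne_none_iff_exists'.mp h1
    obtain ⟨hxl, hxD⟩ := topAfter_mem hx
    obtain ⟨j', hj', rfl⟩ := List.mem_map.mp hxl
    exact ⟨j', by simpa using hj', hxD, by rw [hx]; rfl⟩

lemma top_hv3_of_subset {S : Fin n → Finset (Fin m)} {i : Fin n}
    (h : ∀ j ∈ S i, hb j ∈ D) : topAfter D (hv3 S i) = some hcand := by
  rcases top_hv3_cases hcD S i with ⟨_, h2⟩ | ⟨h1, _⟩
  · exact h2
  · exact absurd h h1

lemma top_hv3_eq_hcand {S : Fin n → Finset (Fin m)} {i : Fin n}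
    (h : topAfter D (hv3 S i) = some hcand) : ∀ j ∈ S i, hb j ∈ D := by
  rcases top_hv3_cases hcD S i with ⟨h1, _⟩ | ⟨_, j, _, _, h2⟩
  · exact h1
  · exact absurd (Option.some_injective _ (h2.symm.trans h)) (hb_ne_hcand j)

lemma top_hv3_ne_hwand (S : Fin n → Finset (Fin m)) (i : Fin n) :
    topAfter D (hv3 S i) ≠ some hwand := by
  rcases top_hv3_cases hcD S i with ⟨_, h2⟩ | ⟨_, j, _, _, h2⟩ <;> rw [h2] <;>
    intro h <;> have := Option.some_injective _ h
  · exact hwand_ne_hcand this.symm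
  · exact hb_ne_hwand j this

lemma top_hv3_eq_hb {S : Fin n → Finset (Fin m)} {i : Fin n} {j : Fin m}
    (h : topAfter D (hv3 S i) = some (hb j)) : ¬ ∀ j' ∈ S i, hb j' ∈ D := by
  intro hall
  rw [top_hv3_of_subset hcD hall] at h
  exact hb_ne_hcand j (Option.some_injective _ h.symm)

omit hcD

lemma top_hv4_alive {j : Fin m} (h : hb j ∉ D) :
    topAfter D (hv4 j) = some (hb j) := by
  rw [hv4, List.cons_append, topAfter_cons, if_neg h]

lemma top_hv4_dead {j : Fin m} (h : hb j ∈ D) (hw : hwand ∉ D) :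
    topAfter D (hv4 j) = some hwand := by
  rw [hv4, List.cons_append, List.cons_append, topAfter_cons, if_pos h,
    topAfter_cons, if_neg hw]

lemma top_hv4_eq_hwand {j : Fin m} (h : topAfter D (hv4 j) = some hwand) :
    hb j ∈ D := by
  by_contra hj
  rw [top_hv4_alive hj] at h
  exact hb_ne_hwand j (Option.some_injective _ h)

lemma top_hv4_eq_hb {j j' : Fin m} (h : topAfter D (hv4 j') = some (hb j)) :
    j' = j ∨ (hb j' ∈ D ∧ hwand ∈ D) := by
  by_cases hj' : hb j' ∈ D
  · by_cases hw : hwand ∈ D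
    · exact Or.inr ⟨hj', hw⟩
    · rw [top_hv4_dead hj' hw] at h
      exact absurd (Option.some_injective _ h).symm (hb_ne_hwand j)
  · rw [top_hv4_alive hj'] at h
    exact Or.inl (by simpa [hb] using Option.some_injective _ h)

end HFacts
section Scores

variable {m n : ℕ} (S : Fin n → Finset (Fin m)) (k : ℕ) (D : Finset (HCand m))

lemma plScore_decomp (x : HCand m) :
    plScore (hsVotes S k) D x =
      (if topAfter D (hv1 m) = some x then 2 * (m - k) + 2 * n * (k + 1) + 4 else 0) +
      (if topAfter D (hv2 m) = some x then 2 * n * (k + 1) + 5 else 0) +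
      (∑ i : Fin n, if topAfter D (hv3 S i) = some x then 2 * (k + 1) else 0) +
      (∑ j : Fin m, if topAfter D (hv4 j) = some x then 2 else 0) := by
  unfold plScore hsVotes
  rw [List.countP_append, List.countP_append, List.countP_append,
    List.countP_flatten, List.countP_flatten, List.map_map, List.map_map]
  rw [List.countP_replicate, List.countP_replicate]
  have h3 : ∀ (N : ℕ) (f : Fin N → List (HCand m)) (c : ℕ),
      (List.map ((List.countP fun l => decide (topAfter D l = some x)) ∘
        fun i => List.replicate c (f i)) (List.finRange N)).sum =
      ∑ i : Fin N, if topAfter D (f i) = some x then c else 0 := by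
    intro N f c
    rw [Fin.sum_univ_def]
    congr 1
    apply List.map_congr_left
    intro i _
    simp [List.countP_replicate]
  rw [h3 n (fun i => hv3 S i) (2 * (k + 1)), h3 m (fun j => hv4 j) 2]
  simp only [decide_eq_true_eq]

lemma sum_ite_card {N : ℕ} (P : Fin N → Prop) [DecidablePred P] (c : ℕ) :
    (∑ i : Fin N, if P i then c else 0) =
      c * (Finset.univ.filter P).card := by
  rw [Finset.card_filter, Finset.mul_sum]
  congr 1
  ext i
  by_cases h : P i <;> simp [h]

end Scores
/-- In the Hitting-Set-to-plurality-DCUDC construction, if there is a deletion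
set `D ⊆ C \ {c}` such that `c` is not a unique plurality winner of
`(C \ D, V)`, then `B' = B \ D` is a hitting set of `S` of size at most `k`. -/
theorem stmt13 {m n : ℕ} (S : Fin n → Finset (Fin m))
    (k : ℕ) (hk : 0 < k) (hkm : k ≤ m)
    (D : Finset (HCand m)) (hcD : hcand ∉ D)
    (hnotwin : ¬ ∀ d : HCand m, d ≠ hcand → d ∉ D →
      plScore (hsVotes S k) D d < plScore (hsVotes S k) D hcand) :
    (∀ i, ∃ j, j ∈ S i ∧ hb j ∉ D) ∧
    (Finset.univ.filter (fun j : Fin m => hb j ∉ D)).card ≤ k := by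
  classical
  push_neg at hnotwin
  obtain ⟨d, hd1, hd2, hd3⟩ := hnotwin
  set α := (Finset.univ.filter (fun i : Fin n => ∀ j ∈ S i, hb j ∈ D)).card with hαdef
  set α' := (Finset.univ.filter (fun i : Fin n => ¬ ∀ j ∈ S i, hb j ∈ D)).card with hα'def
  set β := (Finset.univ.filter (fun j : Fin m => hb j ∈ D)).card with hβdef
  set γ := (Finset.univ.filter (fun j : Fin m => hb j ∉ D)).card with hγdef
  have hαα' : α + α' = n := by
    rw [hαdef, hα'def, Finset.card_filter_add_card_filter_not, Finset.card_univ,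
      Fintype.card_fin]
  have hβγ : β + γ = m := by
    rw [hβdef, hγdef, Finset.card_filter_add_card_filter_not, Finset.card_univ,
      Fintype.card_fin]
  have hmk : m - k + k = m := Nat.sub_add_cancel hkm
  have hβm : β ≤ m := hβγ ▸ Nat.le_add_right β γ
  -- lower bound for c
  have hc : 2 * (m - k) + 2 * n * (k + 1) + 4 +
      (if hwand ∈ D then 2 * n * (k + 1) + 5 else 0) + 2 * (k + 1) * α ≤
      plScore (hsVotes S k) D hcand := by
    rw [plScore_decomp]
    have h2 : (if topAfter D (hv2 m) = some hcand then 2 * n * (k + 1) + 5 else 0) =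
        (if hwand ∈ D then 2 * n * (k + 1) + 5 else 0) := by
      rw [top_hv2 hcD]
      by_cases hw : hwand ∈ D <;> simp [hw, hwand_ne_hcand]
    have h3 : (∑ i : Fin n, if topAfter D (hv3 S i) = some hcand then 2 * (k + 1) else 0) =
        2 * (k + 1) * α := by
      rw [hαdef, ← sum_ite_card]
      refine Finset.sum_congr rfl fun i _ => ?_
      by_cases h : ∀ j ∈ S i, hb j ∈ D
      · rw [if_pos (top_hv3_of_subset hcD h), if_pos h]
      · rw [if_neg (fun hh => h (top_hv3_eq_hcand hcD hh)), if_neg h]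
    rw [if_pos (top_hv1 hcD), h2, h3]
    exact Nat.le_add_right _ _
  -- key claim
  have key : α = 0 ∧ γ ≤ k := by
    match d, hd1, hd2, hd3 with
    | Sum.inr true, hd1, _, _ => exact absurd rfl hd1
    | Sum.inr false, _, hd2, hd3 =>
      -- d = w, w ∉ D
      have hw : (hwand : HCand m) ∉ D := hd2
      have hwsc : plScore (hsVotes S k) D hwand ≤ 2 * n * (k + 1) + 5 + 2 * β := by
        rw [plScore_decomp]
        have h1 : (if topAfter D (hv1 m) = some hwand then
            2 * (m - k) + 2 * n * (k + 1) + 4 else 0) = 0 := by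
          rw [top_hv1 hcD, if_neg]
          simp [hcand, hwand]
        have h2 : (if topAfter D (hv2 m) = some hwand then 2 * n * (k + 1) + 5 else 0) ≤
            2 * n * (k + 1) + 5 := by split <;> omega
        have h3 : (∑ i : Fin n, if topAfter D (hv3 S i) = some hwand then 2 * (k + 1) else 0)
            = 0 := Finset.sum_eq_zero fun i _ => if_neg (top_hv3_ne_hwand hcD S i)
        have h4 : (∑ j : Fin m, if topAfter D (hv4 j) = some hwand then 2 else 0) ≤ 2 * β := by
          rw [hβdef, ← sum_ite_card]
          refine Finset.sum_le_sum fun j _ => ?_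
          by_cases ht : topAfter D (hv4 j) = some hwand
          · rw [if_pos ht, if_pos (top_hv4_eq_hwand ht)]
          · rw [if_neg ht]; exact Nat.zero_le _
        rw [h1, h3]
        omega
      have hineq := le_trans (le_trans hc hd3) hwsc
      rw [if_neg hw] at hineq
      rcases Nat.eq_zero_or_pos α with hα0 | hαpos
      · refine ⟨hα0, ?_⟩
        rw [hα0, Nat.mul_zero] at hineq
        omega
      · exfalso
        have hP : 2 * (k + 1) ≤ 2 * (k + 1) * α := Nat.le_mul_of_pos_right _ hαpos
        omega
    | Sum.inl j, _, hd2, hd3 =>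
      -- d = b_j, b_j ∉ D
      have hbj : (hb j : HCand m) ∉ D := hd2
      have hbsc : plScore (hsVotes S k) D (hb j) ≤
          2 + 2 * (k + 1) * α' + (if hwand ∈ D then 2 * β else 0) := by
        rw [plScore_decomp]
        have h1 : (if topAfter D (hv1 m) = some (hb j) then
            2 * (m - k) + 2 * n * (k + 1) + 4 else 0) = 0 := by
          rw [top_hv1 hcD, if_neg]
          simp [hcand, hb]
        have h2 : (if topAfter D (hv2 m) = some (hb j) then 2 * n * (k + 1) + 5 else 0) = 0 := by
          rw [top_hv2 hcD, if_neg]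
          by_cases hw : hwand ∈ D
          · rw [if_pos hw]; simp [hcand, hb]
          · rw [if_neg hw]; simp [hwand, hb]
        have h3 : (∑ i : Fin n, if topAfter D (hv3 S i) = some (hb j) then 2 * (k + 1) else 0)
            ≤ 2 * (k + 1) * α' := by
          rw [hα'def, ← sum_ite_card]
          refine Finset.sum_le_sum fun i _ => ?_
          by_cases ht : topAfter D (hv3 S i) = some (hb j)
          · rw [if_pos ht, if_pos (top_hv3_eq_hb hcD ht)]
          · rw [if_neg ht]; exact Nat.zero_le _
        have h4 : (∑ j' : Fin m, if topAfter D (hv4 j') = some (hb j) then 2 else 0) ≤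
            2 + (if hwand ∈ D then 2 * β else 0) := by
          have hpt : ∀ j' : Fin m, (if topAfter D (hv4 j') = some (hb j) then 2 else 0) ≤
              (if j' = j then 2 else 0) + (if hb j' ∈ D ∧ hwand ∈ D then 2 else 0) := by
            intro j'
            by_cases ht : topAfter D (hv4 j') = some (hb j)
            · rcases top_hv4_eq_hb ht with h | h
              · rw [if_pos ht, if_pos h]; exact Nat.le_add_right _ _
              · rw [if_pos ht, if_pos h]; omega
            · rw [if_neg ht]; exact Nat.zero_le _
          calc (∑ j' : Fin m, if topAfter D (hv4 j') = some (hb j) then 2 else 0)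
              ≤ ∑ j' : Fin m, ((if j' = j then 2 else 0) +
                  (if hb j' ∈ D ∧ hwand ∈ D then 2 else 0)) :=
                Finset.sum_le_sum fun j' _ => hpt j'
            _ = (∑ j' : Fin m, if j' = j then 2 else 0) +
                  (∑ j' : Fin m, if hb j' ∈ D ∧ hwand ∈ D then 2 else 0) :=
                Finset.sum_add_distrib
            _ ≤ 2 + (if hwand ∈ D then 2 * β else 0) := by
                have e1 : (∑ j' : Fin m, if j' = j then (2:ℕ) else 0) = 2 := by
                  rw [Finset.sum_ite_eq' Finset.univ j (fun _ => (2:ℕ)),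
                    if_pos (Finset.mem_univ j)]
                rw [e1]
                by_cases hw : hwand ∈ D
                · have e2 : (∑ j' : Fin m, if hb j' ∈ D ∧ hwand ∈ D then (2:ℕ) else 0) =
                      2 * β := by
                    rw [hβdef, ← sum_ite_card]
                    refine Finset.sum_congr rfl fun j' _ => ?_
                    simp [hw]
                  rw [e2, if_pos hw]
                · have e2 : (∑ j' : Fin m, if hb j' ∈ D ∧ hwand ∈ D then (2:ℕ) else 0) = 0 :=
                    Finset.sum_eq_zero fun j' _ => by simp [hw]
                  rw [e2, if_neg hw]
        rw [h1, h2]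
        omega
      have hineq := le_trans (le_trans hc hd3) hbsc
      have hPT : 2 * (k + 1) * α + 2 * (k + 1) * α' = 2 * n * (k + 1) := by
        rw [← Nat.mul_add, hαα']; ring
      by_cases hw : hwand ∈ D
      · rw [if_pos hw, if_pos hw] at hineq
        rcases Nat.eq_zero_or_pos n with hn | hn
        · have hα0 : α = 0 := by omega
          have hα'0 : α' = 0 := by omega
          refine ⟨hα0, ?_⟩
          rw [hα0, hα'0, hn] at hineq
          simp only [Nat.mul_zero, Nat.zero_mul, Nat.zero_add, Nat.add_zero] at hineq
          omega
        · exfalso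
          have hQ : 2 * (k + 1) ≤ 2 * n * (k + 1) := by
            calc 2 * (k + 1) = 2 * 1 * (k + 1) := by ring
              _ ≤ 2 * n * (k + 1) := by
                exact Nat.mul_le_mul_right _ (Nat.mul_le_mul_left _ hn)
          omega
      · exfalso
        rw [if_neg hw, if_neg hw] at hineq
        omega
  refine ⟨?_, key.2⟩
  intro i
  by_contra hno
  push_neg at hno
  have hi : i ∈ Finset.univ.filter (fun i : Fin n => ∀ j ∈ S i, hb j ∈ D) :=
    Finset.mem_filter.mpr ⟨Finset.mem_univ i, fun j hj => hno j hj⟩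
  have : 0 < α := Finset.card_pos.mpr ⟨i, hi⟩
  omega
end
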